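/- arXiv:2309.10925 — 2 statements merged into one kernel-verified Lean document; each statement's English description precedes it below -/
import Mathlib

section
/- For the Jackiw–Pi vortex Q(r) = √8 (m+1) r^m/(1+r^{2m+2}) with m ≥ 1 an integer, the self-dual derivative vanishes identically: ∂_r Q(r) − ((m + A_θ[Q](r))/r) Q(r) = 0 for all r > 0, where A_θ[Q](r) = −(1/2)∫₀^r Q(r')² r' dr'. -/
open MeasureTheory Set

/-- The Jackiw–Pi vortex profile. -/
noncomputable def Q (m : ℕ) (r : ℝ) : ℝ :=
  Real.sqrt 8 * ((m : ℝ) + 1) * r ^ m / (1 + r ^ (2 * m + 2))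

/-- The angular connection component of `Q`. -/
noncomputable def Atheta (m : ℕ) (r : ℝ) : ℝ :=
  -(1/2) * ∫ s in (0:ℝ)..r, (Q m s) ^ 2 * s

theorem vortex_selfdual (m : ℕ) (hm : 1 ≤ m) (r : ℝ) (hr : 0 < r) :
    deriv (Q m) r - (((m : ℝ) + Atheta m r) / r) * Q m r = 0 := by
  have hden : ∀ s : ℝ, 0 < 1 + s ^ (2 * m + 2) := by
    intro s
    have h1 : s ^ (2 * m + 2) = (s ^ (m + 1)) ^ 2 := by
      rw [← pow_mul]; ring_nf
    have h2 : (0:ℝ) ≤ s ^ (2 * m + 2) := by rw [h1]; positivity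
    linarith
  have h8 : Real.sqrt 8 ^ 2 = 8 := Real.sq_sqrt (by norm_num)
  -- derivative of the denominator
  have hg : ∀ s : ℝ, HasDerivAt (fun s : ℝ => 1 + s ^ (2 * m + 2))
      ((2 * (m:ℝ) + 2) * s ^ (2 * m + 1)) s := by
    intro s
    have := (hasDerivAt_pow (2 * m + 2) s).const_add 1
    have he : 2 * m + 2 - 1 = 2 * m + 1 := by omega
    rw [he] at this
    refine this.congr_deriv ?_
    push_cast
    ring
  -- antiderivative of (Q m s)^2 * s
  have hF : ∀ s : ℝ, HasDerivAt (fun s : ℝ => -4 * ((m:ℝ) + 1) / (1 + s ^ (2 * m + 2)))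
      ((Q m s) ^ 2 * s) s := by
    intro s
    have := (hasDerivAt_const s (-4 * ((m:ℝ) + 1))).div (hg s) (hden s).ne'
    refine this.congr_deriv ?_
    unfold Q
    have hs := (hden s).ne'
    field_simp
    ring_nf
    rw [h8]
    ring
  have hQcont : Continuous (fun s : ℝ => (Q m s) ^ 2 * s) := by
    unfold Q
    apply Continuous.mul _ continuous_id
    apply Continuous.pow
    exact (continuous_const.mul (continuous_pow m)).div
      (continuous_const.add (continuous_pow _)) (fun s => (hden s).ne')
  have hA : Atheta m r = -2 * ((m:ℝ) + 1) * r ^ (2 * m + 2) / (1 + r ^ (2 * m + 2)) := by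
    unfold Atheta
    rw [intervalIntegral.integral_eq_sub_of_hasDerivAt (fun s _ => hF s)
      (hQcont.intervalIntegrable 0 r)]
    have h0 : (0:ℝ) ^ (2 * m + 2) = 0 := by
      apply zero_pow; omega
    rw [h0]
    have hr' := (hden r).ne'
    field_simp
    ring
  -- derivative of Q
  have hQ : HasDerivAt (Q m)
      ((Real.sqrt 8 * ((m:ℝ) + 1) * ((m:ℝ) * r ^ (m - 1)) * (1 + r ^ (2 * m + 2))
        - Real.sqrt 8 * ((m:ℝ) + 1) * r ^ m * ((2 * (m:ℝ) + 2) * r ^ (2 * m + 1)))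
        / (1 + r ^ (2 * m + 2)) ^ 2) r := by
    have hf : HasDerivAt (fun r : ℝ => Real.sqrt 8 * ((m:ℝ) + 1) * r ^ m)
        (Real.sqrt 8 * ((m:ℝ) + 1) * ((m:ℝ) * r ^ (m - 1))) r := by
      simpa [mul_assoc] using (hasDerivAt_pow m r).const_mul (Real.sqrt 8 * ((m:ℝ) + 1))
    exact hf.div (hg r) (hden r).ne'
  rw [hQ.deriv, hA]
  unfold Q
  have hr' := (hden r).ne'
  obtain ⟨k, rfl⟩ := Nat.exists_eq_add_of_le hm
  simp only [Nat.add_sub_cancel, show 1 + k - 1 = k by omega]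
  push_cast
  field_simp
  ring
end

section
/- For every integer m ≥ 0, the Jackiw–Pi vortex Q(r) = √8 (m+1) r^m/(1+r^{2m+2}) satisfies ∫₀^∞ Q(r)⁴ r dr < ∞ and Q ∈ L⁴(ℝ²), with 2π∫₀^∞ Q⁴ r dr = 2 ( ∫ |∂_r Q|² dx + ∫ ((m+A_θ[Q])/r)² Q² dx ). -/
open MeasureTheory Set Filter

/-- Explicit derivative of `Q`. -/
noncomputable def Qd (m : ℕ) (r : ℝ) : ℝ :=
  Real.sqrt 8 * ((m : ℝ) + 1) *
    ((m : ℝ) * r ^ (m - 1) * (1 + r ^ (2 * m + 2))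
      - r ^ m * ((2 * (m : ℝ) + 2) * r ^ (2 * m + 1))) / (1 + r ^ (2 * m + 2)) ^ 2

/-- Antiderivative of `Q^4 r - 4 Qd^2 r`. -/
noncomputable def Fa (m : ℕ) (r : ℝ) : ℝ :=
  16 * ((m : ℝ) + 1) ^ 2 * r ^ (2 * m) * (-(m : ℝ) + ((m : ℝ) + 2) * r ^ (2 * m + 2))
    / (1 + r ^ (2 * m + 2)) ^ 3

lemma den_pos (m : ℕ) (r : ℝ) : 0 < 1 + r ^ (2 * m + 2) := by
  have h : (0:ℝ) ≤ r ^ (2 * m + 2) := by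
    rw [show 2 * m + 2 = 2 * (m + 1) by ring, pow_mul]
    positivity
  linarith

lemma den_ne (m : ℕ) (r : ℝ) : (1 : ℝ) + r ^ (2 * m + 2) ≠ 0 := (den_pos m r).ne'

lemma sqrt8_sq : Real.sqrt 8 ^ 2 = 8 := Real.sq_sqrt (by norm_num)

lemma sqrt8_pow4 : Real.sqrt 8 ^ 4 = 64 := by
  rw [show (4:ℕ) = 2 * 2 from rfl, pow_mul, sqrt8_sq]; norm_num

lemma Q_sq (m : ℕ) (r : ℝ) :
    (Q m r) ^ 2 = 8 * ((m : ℝ) + 1) ^ 2 * (r ^ m) ^ 2 / (1 + r ^ (2 * m + 2)) ^ 2 := by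
  unfold Q
  rw [div_pow, mul_pow, mul_pow, sqrt8_sq]

lemma Q_pow4 (m : ℕ) (r : ℝ) :
    (Q m r) ^ 4 = 64 * ((m : ℝ) + 1) ^ 4 * (r ^ m) ^ 4 / (1 + r ^ (2 * m + 2)) ^ 4 := by
  unfold Q
  rw [div_pow, mul_pow, mul_pow, sqrt8_pow4]

lemma Qd_sq (m : ℕ) (r : ℝ) :
    (Qd m r) ^ 2 = 8 * ((m : ℝ) + 1) ^ 2 *
      ((m : ℝ) * r ^ (m - 1) * (1 + r ^ (2 * m + 2))
        - r ^ m * ((2 * (m : ℝ) + 2) * r ^ (2 * m + 1))) ^ 2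
      / (1 + r ^ (2 * m + 2)) ^ 4 := by
  unfold Qd
  rw [div_pow, mul_pow, mul_pow, sqrt8_sq, ← pow_mul]

lemma contQ (m : ℕ) : Continuous (Q m) := by
  unfold Q
  exact (continuous_const.mul (continuous_pow m)).div
    (continuous_const.add (continuous_pow _)) (fun x => den_ne m x)

lemma contQd (m : ℕ) : Continuous (Qd m) := by
  unfold Qd
  apply Continuous.div
  · fun_prop
  · fun_prop
  · exact fun x => pow_ne_zero _ (den_ne m x)

lemma hasDerivAt_Q (m : ℕ) (r : ℝ) : HasDerivAt (Q m) (Qd m r) r := by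
  have h1 : HasDerivAt (fun r : ℝ => Real.sqrt 8 * ((m : ℝ) + 1) * r ^ m)
      (Real.sqrt 8 * ((m : ℝ) + 1) * ((m : ℝ) * r ^ (m - 1))) r :=
    (hasDerivAt_pow m r).const_mul _
  have h2 : HasDerivAt (fun r : ℝ => 1 + r ^ (2 * m + 2))
      ((2 * (m : ℝ) + 2) * r ^ (2 * m + 1)) r := by
    have := (hasDerivAt_pow (2 * m + 2) r).const_add 1
    refine this.congr_deriv ?_
    push_cast
    ring_nf
  have := h1.div h2 (den_ne m r)
  refine this.congr_deriv ?_
  unfold Qd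
  rw [div_eq_div_iff (pow_ne_zero _ (den_ne m r)) (pow_ne_zero _ (den_ne m r))]
  ring

lemma deriv_Q (m : ℕ) : deriv (Q m) = Qd m :=
  funext fun r => (hasDerivAt_Q m r).deriv

lemma Atheta_eq (m : ℕ) (r : ℝ) :
    Atheta m r = -2 * ((m : ℝ) + 1) * r ^ (2 * m + 2) / (1 + r ^ (2 * m + 2)) := by
  have key : ∫ s in (0:ℝ)..r, (Q m s) ^ 2 * s
      = (fun s : ℝ => -(4 * ((m : ℝ) + 1)) / (1 + s ^ (2 * m + 2))) r
        - (fun s : ℝ => -(4 * ((m : ℝ) + 1)) / (1 + s ^ (2 * m + 2))) 0 := by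
    apply intervalIntegral.integral_eq_sub_of_hasDerivAt
    · intro x _
      have h2 : HasDerivAt (fun s : ℝ => 1 + s ^ (2 * m + 2))
          ((2 * (m : ℝ) + 2) * x ^ (2 * m + 1)) x := by
        have := (hasDerivAt_pow (2 * m + 2) x).const_add 1
        refine this.congr_deriv ?_
        push_cast
        ring_nf
      have := (hasDerivAt_const x (-(4 * ((m : ℝ) + 1)))).div h2 (den_ne m x)
      refine this.congr_deriv ?_
      rw [Q_sq]
      field_simp
      ring
    · exact ((contQ m).pow 2).mul continuous_id |>.intervalIntegrable 0 r
  unfold Atheta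
  rw [key]
  have h0 : (0:ℝ) ^ (2 * m + 2) = 0 := zero_pow (by omega)
  simp only [h0, add_zero]
  field_simp [den_ne m r]
  ring

lemma Qd_eq (m : ℕ) {r : ℝ} (hr : r ≠ 0) :
    Qd m r = Q m r * (((m : ℝ) + Atheta m r) / r) := by
  have hd := den_ne m r
  rw [Atheta_eq]
  unfold Qd Q
  cases m with
  | zero =>
    norm_num at hd ⊢
    field_simp
  | succ n =>
    simp only [Nat.add_sub_cancel] at *
    push_cast at hd ⊢
    field_simp
    ring

lemma contFa (m : ℕ) : Continuous (Fa m) := by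
  unfold Fa
  apply Continuous.div
  · fun_prop
  · fun_prop
  · exact fun x => pow_ne_zero _ (den_ne m x)

lemma Fa_zero (m : ℕ) : Fa m 0 = 0 := by
  unfold Fa
  cases m <;> norm_num

lemma hasDerivAt_den (m : ℕ) (r : ℝ) :
    HasDerivAt (fun s : ℝ => 1 + s ^ (2 * m + 2)) ((2 * (m : ℝ) + 2) * r ^ (2 * m + 1)) r := by
  have := (hasDerivAt_pow (2 * m + 2) r).const_add 1
  refine this.congr_deriv ?_
  push_cast
  ring_nf

lemma hasDerivAt_Fa (m : ℕ) {r : ℝ} (hr : 0 < r) :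
    HasDerivAt (Fa m) ((Q m r) ^ 4 * r - 4 * ((Qd m r) ^ 2 * r)) r := by
  have hd := den_ne m r
  have hDen : HasDerivAt (fun s : ℝ => (1 + s ^ (2 * m + 2)) ^ 3)
      (3 * (1 + r ^ (2 * m + 2)) ^ 2 * ((2 * (m : ℝ) + 2) * r ^ (2 * m + 1))) r := by
    have := (hasDerivAt_den m r).pow 3
    refine this.congr_deriv (by norm_num)
  have hB : HasDerivAt (fun s : ℝ => -(m : ℝ) + ((m : ℝ) + 2) * s ^ (2 * m + 2))
      (((m : ℝ) + 2) * ((2 * (m : ℝ) + 2) * r ^ (2 * m + 1))) r := by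
    have := ((hasDerivAt_pow (2 * m + 2) r).const_mul ((m : ℝ) + 2)).const_add (-(m : ℝ))
    refine this.congr_deriv ?_
    push_cast
    ring_nf
  have hA : HasDerivAt (fun s : ℝ => s ^ (2 * m)) ((2 * (m : ℝ)) * r ^ (2 * m - 1)) r := by
    have := hasDerivAt_pow (2 * m) r
    refine this.congr_deriv ?_
    push_cast
    ring_nf
  have key := ((hA.mul hB).const_mul (16 * ((m : ℝ) + 1) ^ 2)).div hDen (pow_ne_zero _ hd)
  have heq : Fa m = fun s : ℝ => 16 * ((m : ℝ) + 1) ^ 2 *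
      (s ^ (2 * m) * (-(m : ℝ) + ((m : ℝ) + 2) * s ^ (2 * m + 2))) / (1 + s ^ (2 * m + 2)) ^ 3 := by
    funext s
    unfold Fa
    ring
  rw [heq]
  refine key.congr_deriv ?_
  simp only [Pi.mul_apply]
  rw [Q_pow4, Qd_sq]
  have hrne := hr.ne'
  cases m with
  | zero =>
    norm_num at hd ⊢
    field_simp
    ring
  | succ n =>
    simp only [Nat.add_sub_cancel, show 2 * (n + 1) - 1 = 2 * n + 1 from by omega] at *
    push_cast at hd ⊢
    field_simp
    ring

lemma key_ineq {r : ℝ} (hr : 1 ≤ r) {C : ℝ} (hC : 0 ≤ C) {a b : ℕ} (hab : a + 2 ≤ b)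
    {den : ℝ} (hden : r ^ b ≤ den) (hdpos : 0 < den) :
    C * r ^ a / den ≤ C / r ^ 2 := by
  have hr0 : (0:ℝ) < r := lt_of_lt_of_le one_pos hr
  rw [div_le_div_iff₀ hdpos (by positivity)]
  calc C * r ^ a * r ^ 2 = C * r ^ (a + 2) := by ring
    _ ≤ C * r ^ b := by
        apply mul_le_mul_of_nonneg_left _ hC
        exact pow_le_pow_right₀ hr hab
    _ ≤ C * den := mul_le_mul_of_nonneg_left hden hC

lemma den_pow_ge (m : ℕ) {r : ℝ} (hr : 1 ≤ r) (p : ℕ) :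
    r ^ (p * (2 * m + 2)) ≤ (1 + r ^ (2 * m + 2)) ^ p := by
  rw [mul_comm p, pow_mul]
  apply pow_le_pow_left₀ (by positivity) _ p
  linarith [den_pos m r]

lemma boundQ4 (m : ℕ) {r : ℝ} (hr : 1 ≤ r) :
    (Q m r) ^ 4 * r ≤ 64 * ((m : ℝ) + 1) ^ 4 / r ^ 2 := by
  have e : (r ^ m) ^ 4 * r = r ^ (4 * m + 1) := by
    rw [← pow_mul]
    ring
  have h : (Q m r) ^ 4 * r = 64 * ((m : ℝ) + 1) ^ 4 * r ^ (4 * m + 1) / (1 + r ^ (2 * m + 2)) ^ 4 := by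
    rw [Q_pow4, ← e]
    ring
  rw [h]
  apply key_ineq hr (by positivity) (show 4 * m + 1 + 2 ≤ 4 * (2 * m + 2) from by omega)
    (den_pow_ge m hr 4) (by positivity)

lemma boundQd2 (m : ℕ) {r : ℝ} (hr : 1 ≤ r) :
    (Qd m r) ^ 2 * r ≤ 8 * ((m : ℝ) + 1) ^ 2 * (4 * (m : ℝ) + 2) ^ 2 / r ^ 2 := by
  have hr0 : (0:ℝ) < r := lt_of_lt_of_le one_pos hr
  have hu : (1:ℝ) ≤ r ^ (2 * m + 2) := one_le_pow₀ hr
  set u := r ^ (2 * m + 2) with hu_def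
  have hN : ((m : ℝ) * r ^ (m - 1) * (1 + u) - r ^ m * ((2 * (m : ℝ) + 2) * r ^ (2 * m + 1))) ^ 2
      ≤ ((4 * (m : ℝ) + 2) * r ^ (3 * m + 2)) ^ 2 := by
    have h1 : r ^ (m - 1) ≤ r ^ m := pow_le_pow_right₀ hr (Nat.sub_le m 1)
    have hm0 : (0:ℝ) ≤ (m:ℝ) := Nat.cast_nonneg m
    have e : r ^ m * u = r ^ (3 * m + 2) := by rw [hu_def, ← pow_add]; ring_nf
    have h2 : (m : ℝ) * r ^ (m - 1) * (1 + u) ≤ 2 * (m : ℝ) * r ^ (3 * m + 2) := by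
      calc (m : ℝ) * r ^ (m - 1) * (1 + u) ≤ (m : ℝ) * r ^ m * (1 + u) := by
            apply mul_le_mul_of_nonneg_right (mul_le_mul_of_nonneg_left h1 hm0) (by linarith)
        _ ≤ (m : ℝ) * r ^ m * (2 * u) := by
            apply mul_le_mul_of_nonneg_left (by linarith) (by positivity)
        _ = 2 * (m : ℝ) * r ^ (3 * m + 2) := by linear_combination (2 * (m:ℝ)) * e
    have h3 : r ^ m * ((2 * (m : ℝ) + 2) * r ^ (2 * m + 1)) ≤ (2 * (m : ℝ) + 2) * r ^ (3 * m + 2) := by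
      have e2 : r ^ m * r ^ (2 * m + 1) = r ^ (3 * m + 1) := by rw [← pow_add]; ring_nf
      have h4 : r ^ (3 * m + 1) ≤ r ^ (3 * m + 2) := pow_le_pow_right₀ hr (by omega)
      have h5 := mul_le_mul_of_nonneg_left h4 (show (0:ℝ) ≤ 2 * (m:ℝ) + 2 by positivity)
      calc r ^ m * ((2 * (m : ℝ) + 2) * r ^ (2 * m + 1))
          = (2 * (m : ℝ) + 2) * r ^ (3 * m + 1) := by linear_combination (2 * (m:ℝ) + 2) * e2
        _ ≤ (2 * (m : ℝ) + 2) * r ^ (3 * m + 2) := h5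
    have hnn1 : (0:ℝ) ≤ (m : ℝ) * r ^ (m - 1) * (1 + u) := by positivity
    have hnn2 : (0:ℝ) ≤ r ^ m * ((2 * (m : ℝ) + 2) * r ^ (2 * m + 1)) := by positivity
    have hmX : (0:ℝ) ≤ 2 * (m : ℝ) * r ^ (3 * m + 2) := by positivity
    have hBX : (0:ℝ) ≤ (2 * (m : ℝ) + 2) * r ^ (3 * m + 2) := by positivity
    exact sq_le_sq' (by linarith) (by linarith)
  have h : (Qd m r) ^ 2 * r ≤ 8 * ((m : ℝ) + 1) ^ 2 * (4 * (m : ℝ) + 2) ^ 2 * r ^ (6 * m + 5) / (1 + u) ^ 4 := by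
    rw [Qd_sq, div_mul_eq_mul_div]
    apply div_le_div_of_nonneg_right _ (pow_pos (den_pos m r) 4).le
    have e : ((4 * (m : ℝ) + 2) * r ^ (3 * m + 2)) ^ 2 * r = (4 * (m : ℝ) + 2) ^ 2 * r ^ (6 * m + 5) := by
      rw [mul_pow, ← pow_mul]
      ring_nf
    have step := mul_le_mul_of_nonneg_left (mul_le_mul_of_nonneg_right hN hr0.le)
      (show (0:ℝ) ≤ 8 * ((m : ℝ) + 1) ^ 2 by positivity)
    have eq2 : 8 * ((m : ℝ) + 1) ^ 2 * (((4 * (m : ℝ) + 2) * r ^ (3 * m + 2)) ^ 2 * r)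
        = 8 * ((m : ℝ) + 1) ^ 2 * (4 * (m : ℝ) + 2) ^ 2 * r ^ (6 * m + 5) := by
      linear_combination (8 * ((m : ℝ) + 1) ^ 2) * e
    linarith [step, eq2]

  refine le_trans h ?_
  apply key_ineq hr (by positivity) (show 6 * m + 5 + 2 ≤ 4 * (2 * m + 2) from by omega)
    (den_pow_ge m hr 4) (by positivity)

lemma boundFa (m : ℕ) {r : ℝ} (hr : 1 ≤ r) :
    |Fa m r| ≤ 16 * ((m : ℝ) + 1) ^ 2 * (2 * (m : ℝ) + 2) / r ^ 2 := by
  have hr0 : (0:ℝ) < r := lt_of_lt_of_le one_pos hr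
  have hu : (1:ℝ) ≤ r ^ (2 * m + 2) := one_le_pow₀ hr
  set u := r ^ (2 * m + 2) with hu_def
  have habs : |Fa m r| ≤ 16 * ((m : ℝ) + 1) ^ 2 * (2 * (m : ℝ) + 2) * r ^ (4 * m + 2) / (1 + u) ^ 3 := by
    unfold Fa
    rw [abs_div, abs_of_pos (pow_pos (den_pos m r) 3), div_le_div_iff₀ (pow_pos (den_pos m r) 3) (pow_pos (den_pos m r) 3)]
    have hb : |16 * ((m : ℝ) + 1) ^ 2 * r ^ (2 * m) * (-(m : ℝ) + ((m : ℝ) + 2) * u)|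
        ≤ 16 * ((m : ℝ) + 1) ^ 2 * (2 * (m : ℝ) + 2) * r ^ (4 * m + 2) := by
      have e : r ^ (2 * m) * u = r ^ (4 * m + 2) := by rw [hu_def, ← pow_add]; ring_nf
      rw [abs_mul, abs_of_nonneg (by positivity : (0:ℝ) ≤ 16 * ((m : ℝ) + 1) ^ 2 * r ^ (2 * m))]
      have hB : |(-(m : ℝ) + ((m : ℝ) + 2) * u)| ≤ (2 * (m : ℝ) + 2) * u := by
        rw [abs_le]
        constructor <;> nlinarith [Nat.cast_nonneg (α := ℝ) m]
      calc 16 * ((m : ℝ) + 1) ^ 2 * r ^ (2 * m) * |(-(m : ℝ) + ((m : ℝ) + 2) * u)|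
          ≤ 16 * ((m : ℝ) + 1) ^ 2 * r ^ (2 * m) * ((2 * (m : ℝ) + 2) * u) := by
            apply mul_le_mul_of_nonneg_left hB (by positivity)
        _ = 16 * ((m : ℝ) + 1) ^ 2 * (2 * (m : ℝ) + 2) * r ^ (4 * m + 2) := by
            rw [← e]; ring
    nlinarith [pow_pos (den_pos m r) 3, abs_nonneg (16 * ((m : ℝ) + 1) ^ 2 * r ^ (2 * m) * (-(m : ℝ) + ((m : ℝ) + 2) * u))]
  refine le_trans habs ?_
  apply key_ineq hr (by positivity) (show 4 * m + 2 + 2 ≤ 3 * (2 * m + 2) from by omega)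
    (den_pow_ge m hr 3) (by positivity)

lemma tendsto_Fa (m : ℕ) : Filter.Tendsto (Fa m) Filter.atTop (nhds 0) := by
  apply squeeze_zero_norm' (a := fun r => 16 * ((m : ℝ) + 1) ^ 2 * (2 * (m : ℝ) + 2) / r ^ 2)
  · filter_upwards [Filter.eventually_ge_atTop (1:ℝ)] with r hr
    exact boundFa m hr
  · exact Filter.Tendsto.div_atTop tendsto_const_nhds (tendsto_pow_atTop two_ne_zero)

lemma integrable_aux {f : ℝ → ℝ} (hf : Continuous f) (C : ℝ)
    (hb : ∀ r : ℝ, 1 ≤ r → |f r| ≤ C / r ^ 2) :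
    IntegrableOn f (Ioi 0) := by
  rw [← Ioc_union_Ioi_eq_Ioi (zero_le_one (α := ℝ))]
  apply IntegrableOn.union
  · exact hf.integrableOn_Ioc
  · apply Integrable.mono' (g := fun r => C * r ^ (-2 : ℝ))
      (((integrableOn_Ioi_rpow_of_lt (by norm_num) one_pos)).const_mul C)
      (hf.aestronglyMeasurable.restrict)
    rw [ae_restrict_iff' measurableSet_Ioi]
    filter_upwards with r hr
    have hr1 : (1:ℝ) ≤ r := le_of_lt hr
    have hr0 : (0:ℝ) < r := lt_of_lt_of_le one_pos hr1
    have : r ^ (-2 : ℝ) = (r ^ (2:ℕ))⁻¹ := by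
      rw [show (-2:ℝ) = -((2:ℕ):ℝ) from by norm_num, Real.rpow_neg hr0.le, Real.rpow_natCast]
    rw [Real.norm_eq_abs, this, ← div_eq_mul_inv]
    exact hb r hr1

lemma intQ4 (m : ℕ) : IntegrableOn (fun r => (Q m r) ^ 4 * r) (Ioi 0) := by
  apply integrable_aux (by have := contQ m; fun_prop) (64 * ((m : ℝ) + 1) ^ 4)
  intro r hr
  have h0 : 0 ≤ (Q m r) ^ 4 * r := by positivity
  rw [abs_of_nonneg h0]
  exact boundQ4 m hr

lemma intQd2 (m : ℕ) : IntegrableOn (fun r => (Qd m r) ^ 2 * r) (Ioi 0) := by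
  apply integrable_aux (by have := contQd m; fun_prop) (8 * ((m : ℝ) + 1) ^ 2 * (4 * (m : ℝ) + 2) ^ 2)
  intro r hr
  have h0 : 0 ≤ (Qd m r) ^ 2 * r := by positivity
  rw [abs_of_nonneg h0]
  exact boundQd2 m hr

theorem vortex_quartic_identity (m : ℕ) :
    IntegrableOn (fun r => (Q m r) ^ 4 * r) (Ioi 0) ∧
      2 * Real.pi * ∫ r in Ioi (0:ℝ), (Q m r) ^ 4 * r
        = 2 * ((2 * Real.pi * ∫ r in Ioi (0:ℝ), (deriv (Q m) r) ^ 2 * r)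
            + (2 * Real.pi * ∫ r in Ioi (0:ℝ),
                (((m : ℝ) + Atheta m r) / r) ^ 2 * (Q m r) ^ 2 * r)) := by
  have hI1 := intQ4 m
  have hI2 := intQd2 m
  have hD : ∫ r in Ioi (0:ℝ), ((Q m r) ^ 4 * r - 4 * ((Qd m r) ^ 2 * r)) = 0 := by
    have := integral_Ioi_of_hasDerivAt_of_tendsto (a := 0)
      ((contFa m).continuousWithinAt)
      (fun x hx => hasDerivAt_Fa m (show (0:ℝ) < x from hx))
      (hI1.sub (hI2.const_mul 4))
      (tendsto_Fa m)
    rw [Fa_zero, sub_zero] at this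
    exact this
  have hsub : (∫ r in Ioi (0:ℝ), (Q m r) ^ 4 * r)
      = 4 * ∫ r in Ioi (0:ℝ), (Qd m r) ^ 2 * r := by
    rw [integral_sub hI1 (hI2.const_mul 4), integral_const_mul] at hD
    linarith
  refine ⟨hI1, ?_⟩
  have e2 : (∫ r in Ioi (0:ℝ), (deriv (Q m) r) ^ 2 * r) = ∫ r in Ioi (0:ℝ), (Qd m r) ^ 2 * r := by
    rw [deriv_Q]
  have e3 : (∫ r in Ioi (0:ℝ), (((m : ℝ) + Atheta m r) / r) ^ 2 * (Q m r) ^ 2 * r)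
      = ∫ r in Ioi (0:ℝ), (Qd m r) ^ 2 * r := by
    apply setIntegral_congr_fun measurableSet_Ioi
    intro r hr
    simp only [Qd_eq m (show (0:ℝ) < r from hr).ne']
    ring
  rw [e2, e3, hsub]
  ring
end
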